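/- Let R be a Noetherian commutative ring and 𝔭 a prime ideal. If for some fixed h ≥ 1 and all m ≥ 1 one has 𝔭^{(2hm+1)} ⊆ 𝔭 · 𝔭^{(2h(m-1)+1)}, then by induction 𝔭^{(2hn+1)} ⊆ 𝔭^{n+1} for all n ≥ 1, and consequently 𝔭^{(2hn)} ⊆ 𝔭^n for all n ≥ 1. -/

import Mathlib

/-- The `n`-th symbolic power of a prime ideal `𝔭`: the contraction of
`𝔭^n R_𝔭` to `R` along the localization map. -/
noncomputable def primeSymbolicPower {R : Type*} [CommRing R] (𝔭 : Ideal R) [𝔭.IsPrime]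
    (n : ℕ) : Ideal R :=
  (Ideal.map (algebraMap R (Localization.AtPrime 𝔭)) (𝔭 ^ n)).comap
    (algebraMap R (Localization.AtPrime 𝔭))

lemma primeSymbolicPower_anti {R : Type*} [CommRing R] (𝔭 : Ideal R) [𝔭.IsPrime]
    {M N : ℕ} (hMN : N ≤ M) : primeSymbolicPower 𝔭 M ≤ primeSymbolicPower 𝔭 N := by
  unfold primeSymbolicPower
  exact Ideal.comap_mono (Ideal.map_mono (Ideal.pow_le_pow_right hMN))

lemma primeSymbolicPower_one {R : Type*} [CommRing R] (𝔭 : Ideal R) [𝔭.IsPrime] :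
    primeSymbolicPower 𝔭 1 = 𝔭 := by
  unfold primeSymbolicPower
  rw [pow_one]
  exact IsLocalization.comap_map_of_isPrime_disjoint 𝔭.primeCompl _ inferInstance
    (Set.disjoint_left.mpr fun x hx => hx)

theorem stmt_5 {R : Type*} [CommRing R] [IsNoetherianRing R] (𝔭 : Ideal R) [𝔭.IsPrime]
    (h : ℕ) (hh : 1 ≤ h)
    (hyp : ∀ m : ℕ, 1 ≤ m →
      primeSymbolicPower 𝔭 (2 * h * m + 1) ≤ 𝔭 * primeSymbolicPower 𝔭 (2 * h * (m - 1) + 1)) :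
    (∀ n : ℕ, 1 ≤ n → primeSymbolicPower 𝔭 (2 * h * n + 1) ≤ 𝔭 ^ (n + 1)) ∧
      (∀ n : ℕ, 1 ≤ n → primeSymbolicPower 𝔭 (2 * h * n) ≤ 𝔭 ^ n) := by
  have part1 : ∀ n : ℕ, 1 ≤ n → primeSymbolicPower 𝔭 (2 * h * n + 1) ≤ 𝔭 ^ (n + 1) := by
    intro n hn
    induction n with
    | zero => omega
    | succ k ih =>
      rcases Nat.eq_or_lt_of_le hn with h1 | h1
      · -- k = 0, base case n = 1
        have hk : k = 0 := by omega
        subst hk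
        calc primeSymbolicPower 𝔭 (2 * h * 1 + 1)
            ≤ 𝔭 * primeSymbolicPower 𝔭 (2 * h * (1 - 1) + 1) := hyp 1 le_rfl
          _ = 𝔭 * 𝔭 := by norm_num [primeSymbolicPower_one]
          _ = 𝔭 ^ (1 + 1) := (sq 𝔭).symm
      · have hk : 1 ≤ k := by omega
        calc primeSymbolicPower 𝔭 (2 * h * (k + 1) + 1)
            ≤ 𝔭 * primeSymbolicPower 𝔭 (2 * h * (k + 1 - 1) + 1) := hyp (k + 1) (by omega)
          _ = 𝔭 * primeSymbolicPower 𝔭 (2 * h * k + 1) := by norm_num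
          _ ≤ 𝔭 * 𝔭 ^ (k + 1) := Ideal.mul_mono_right (ih hk)
          _ = 𝔭 ^ (k + 1 + 1) := (pow_succ' 𝔭 (k + 1)).symm
  refine ⟨part1, fun n hn => ?_⟩
  rcases Nat.eq_or_lt_of_le hn with h1 | h1
  · subst h1
    calc primeSymbolicPower 𝔭 (2 * h * 1)
        ≤ primeSymbolicPower 𝔭 1 := primeSymbolicPower_anti 𝔭 (by omega)
      _ = 𝔭 ^ 1 := by rw [primeSymbolicPower_one, pow_one]
  · have hk : 1 ≤ n - 1 := by omega
    calc primeSymbolicPower 𝔭 (2 * h * n)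
        ≤ primeSymbolicPower 𝔭 (2 * h * (n - 1) + 1) := by
          apply primeSymbolicPower_anti
          have hn' : n = n - 1 + 1 := by omega
          calc 2 * h * (n - 1) + 1 ≤ 2 * h * (n - 1) + 2 * h := by omega
            _ = 2 * h * n := by
                conv_rhs => rw [hn']
                ring
      _ ≤ 𝔭 ^ (n - 1 + 1) := part1 (n - 1) hk
      _ = 𝔭 ^ n := by congr 1; omega
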